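/- Let 0 → M₁ → M₂ → π → M₃ → 0 be a short exact sequence of ℤΓ-modules where π is H⁰-surjective and M₃ is permutation projective. Then the sequence splits. -/

import Mathlib

open CategoryTheory CategoryTheory.Limits groupCohomology

/-- A permutation `ℤΓ`-module: one isomorphic to `ℤ[X]` for some `Γ`-set `X`. -/
def IsPermutationModule {Γ : Type} [Group Γ] (F : Rep ℤ Γ) : Prop :=
  ∃ (X : Type) (_ : MulAction Γ X), Nonempty (F ≅ Rep.ofMulAction ℤ Γ X)

/-- A permutation projective module: a direct summand of a permutation module. -/
def IsPermutationProjective {Γ : Type} [Group Γ] (M : Rep ℤ Γ) : Prop :=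
  ∃ F : Rep ℤ Γ, IsPermutationModule F ∧ ∃ (i : M ⟶ F) (r : F ⟶ M), i ≫ r = 𝟙 M

/-- A coflasque module: `ℤ`-free with vanishing `H¹(Γ', M)` for all subgroups `Γ' ≤ Γ`. -/
def IsCoflasque {Γ : Type} [Group Γ] (M : Rep ℤ Γ) : Prop :=
  (@Module.Free ℤ M.V _ _ M.hV2) ∧
    ∀ Γ' : Subgroup Γ,
      Subsingleton (H1 ((Rep.resFunctor Γ'.subtype).obj M))

/-- A permutation presentation of `M`: an exact sequence `0 → F → F → M → 0`
with `F` a permutation module. -/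
def HasPermutationPresentation {Γ : Type} [Group Γ] (M : Rep ℤ Γ) : Prop :=
  ∃ (F : Rep ℤ Γ) (_ : IsPermutationModule F) (f : F ⟶ F) (π : F ⟶ M),
    Function.Injective f.hom ∧ Function.Surjective π.hom ∧ Function.Exact f.hom π.hom

/-- `π` is `H⁰`-surjective if it is surjective on `Γ'`-invariants for every subgroup `Γ'`. -/
def IsH0Surjective {Γ : Type} [Group Γ] {M N : Rep ℤ Γ} (π : M ⟶ N) : Prop :=
  ∀ Γ' : Subgroup Γ, ∀ n : N, (∀ γ : Γ', N.ρ ↑γ n = n) →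
    ∃ m : M, (∀ γ : Γ', M.ρ ↑γ m = m) ∧ π.hom m = n

lemma lift_aux {Γ : Type} [Group Γ] {M₂ M₃ : Rep ℤ Γ} (π : M₂ ⟶ M₃)
    (hH0 : IsH0Surjective π) (X : Type) [MulAction Γ X]
    (rr : Rep.ofMulAction ℤ Γ X ⟶ M₃) :
    ∃ t : Rep.ofMulAction ℤ Γ X ⟶ M₂, t ≫ π = rr := by
  classical
  letI : Module ℤ ↑M₂.V := M₂.hV2
  letI : Module ℤ ↑M₃.V := M₃.hV2
  set Q := Quotient (MulAction.orbitRel Γ X)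
  have ρ_single : ∀ (γ : Γ) (x : X) (b : ℤ),
      (Rep.ofMulAction ℤ Γ X).ρ γ (MonoidAlgebra.single x b) = MonoidAlgebra.single (γ • x) b :=
    fun γ x b => Representation.ofMulAction_single _ _ _
  have hstab : ∀ c : Q, ∀ γ : MulAction.stabilizer Γ c.out,
      M₃.ρ ↑γ (rr.hom (MonoidAlgebra.single c.out 1)) = rr.hom (MonoidAlgebra.single c.out 1) := by
    intro c γ
    rw [← Rep.hom_comm_apply, ρ_single, γ.2]
  choose m₀ hm₀fix hm₀π using fun c : Q =>
    hH0 (MulAction.stabilizer Γ c.out) (rr.hom (MonoidAlgebra.single c.out 1)) (hstab c)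
  have hexi : ∀ x : X, ∃ γ : Γ, γ • (Quotient.mk _ x : Q).out = x := by
    intro x
    have h := Quotient.mk_out (s := MulAction.orbitRel Γ X) x
    rw [MulAction.orbitRel_apply, MulAction.mem_orbit_iff] at h
    obtain ⟨γ, hγ⟩ := h
    exact ⟨γ⁻¹, by rw [← hγ, inv_smul_smul]⟩
  choose γx hγx using hexi
  have comp : ∀ (a b : Γ) (m : M₂.V), M₂.ρ a (M₂.ρ b m) = M₂.ρ (a * b) m := by
    intro a b m; rw [map_mul]; rfl
  set g : X → M₂.V := fun x => M₂.ρ (γx x) (m₀ (Quotient.mk _ x)) with hg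
  have hA : ∀ (γ : Γ) (x : X), g (γ • x) = M₂.ρ γ (g x) := by
    intro γ x
    have hq : (Quotient.mk _ (γ • x) : Q) = Quotient.mk _ x :=
      Quotient.sound (MulAction.mem_orbit x γ)
    have h1 : γx (γ • x) • (Quotient.mk _ x : Q).out = γ • x := by
      have := hγx (γ • x); rwa [hq] at this
    have h2 : ((γ * γx x)⁻¹ * γx (γ • x)) ∈ MulAction.stabilizer Γ
        (Quotient.mk (MulAction.orbitRel Γ X) x).out := by
      rw [MulAction.mem_stabilizer_iff, mul_smul, h1]
      have hx : γ • x = (γ * γx x) • (Quotient.mk (MulAction.orbitRel Γ X) x : Q).out := by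
        rw [mul_smul, hγx]
      rw [hx, inv_smul_smul]
    have h3 := hm₀fix (Quotient.mk _ x) ⟨_, h2⟩
    have e1 : (γ * γx x) * ((γ * γx x)⁻¹ * γx (γ • x)) = γx (γ • x) := by group
    simp only [hg, hq]
    calc M₂.ρ (γx (γ • x)) (m₀ (Quotient.mk _ x))
        = M₂.ρ ((γ * γx x) * ((γ * γx x)⁻¹ * γx (γ • x))) (m₀ (Quotient.mk _ x)) := by
          rw [e1]
      _ = M₂.ρ (γ * γx x) (M₂.ρ ((γ * γx x)⁻¹ * γx (γ • x)) (m₀ (Quotient.mk _ x))) :=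
          (comp _ _ _).symm
      _ = M₂.ρ (γ * γx x) (m₀ (Quotient.mk _ x)) := by rw [h3]
      _ = M₂.ρ γ (M₂.ρ (γx x) (m₀ (Quotient.mk _ x))) := (comp _ _ _).symm
  have hB : ∀ x : X, π.hom (g x) = rr.hom (MonoidAlgebra.single x 1) := by
    intro x
    rw [hg]
    simp only
    rw [Rep.hom_comm_apply, hm₀π, ← Rep.hom_comm_apply, ρ_single, hγx]
  set T : (Rep.ofMulAction ℤ Γ X) →ₗ[ℤ] M₂.V :=
    (Finsupp.lift M₂.V ℤ X g).comp (MonoidAlgebra.coeffLinearEquiv ℤ).toLinearMap with hT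
  have hTs : ∀ x : X, T (MonoidAlgebra.single x 1) = g x := by
    intro x
    rw [hT, LinearMap.comp_apply]
    show Finsupp.lift M₂.V ℤ X g (Finsupp.single x 1) = g x
    rw [Finsupp.lift_apply]
    exact (Finsupp.sum_single_index (M₂.hV2.zero_smul (g x))).trans (M₂.hV2.one_smul (g x))
  refine ⟨ConcreteCategory.ofHom (C := Rep ℤ Γ) (X := Rep.ofMulAction ℤ Γ X) (Y := M₂) ⟨T, ?_⟩, ?_⟩
  · intro γ
    refine MonoidAlgebra.lhom_ext' fun x => LinearMap.ext_ring ?_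
    simp only [LinearMap.comp_apply, MonoidAlgebra.lsingle_apply]
    show T ((Rep.ofMulAction ℤ Γ X).ρ γ (MonoidAlgebra.single x 1)) = M₂.ρ γ (T (MonoidAlgebra.single x 1))
    rw [ρ_single, hTs, hTs, hA]
  · apply Rep.hom_ext
    apply Representation.IntertwiningMap.ext
    refine MonoidAlgebra.lhom_ext' fun x => LinearMap.ext_ring ?_
    simp only [LinearMap.comp_apply, MonoidAlgebra.lsingle_apply]
    show π.hom (T (MonoidAlgebra.single x 1)) = rr.hom (MonoidAlgebra.single x 1)
    rw [hTs, hB]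

theorem splits_of_isH0Surjective_of_permutation_projective (Γ : Type) [Group Γ]
    [Finite Γ] (M₁ M₂ M₃ : Rep ℤ Γ) (i : M₁ ⟶ M₂) (π : M₂ ⟶ M₃)
    (hi : Function.Injective i.hom) (hπ : Function.Surjective π.hom)
    (hex : Function.Exact i.hom π.hom) (hH0 : IsH0Surjective π)
    (h₃ : IsPermutationProjective M₃) :
    ∃ s : M₃ ⟶ M₂, s ≫ π = 𝟙 M₃ := by
  obtain ⟨F, ⟨X, instX, ⟨e⟩⟩, iF, r, hir⟩ := h₃
  obtain ⟨t, ht⟩ := lift_aux π hH0 X (e.inv ≫ r)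
  refine ⟨iF ≫ e.hom ≫ t, ?_⟩
  rw [Category.assoc, Category.assoc, ht, Iso.hom_inv_id_assoc, hir]
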